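/- (Hayashi–Nagaoka operator inequality) Let S and T be n×n complex matrices with 0 ≤ S ≤ I (S positive semidefinite and I − S positive semidefinite) and T positive semidefinite, and suppose S + T is positive definite. Then I − (S+T)^{−1/2} S (S+T)^{−1/2} ≤ 2(I − S) + 4T in the Loewner order, where (S+T)^{−1/2} denotes the inverse of the positive semidefinite square root of S+T. -/

import Mathlib

open Matrix ComplexOrder

noncomputable section

/-- The positive semidefinite square root of a positive semidefinite matrix
(the definition Mathlib had under this name, since removed). -/
def Matrix.PosSemidef.sqrt {n : Type*} [Fintype n] [DecidableEq n] {A : Matrix n n ℂ}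
    (hA : A.PosSemidef) : Matrix n n ℂ :=
  hA.1.eigenvectorUnitary.1 * diagonal ((↑) ∘ (√·) ∘ hA.1.eigenvalues) *
    (star hA.1.eigenvectorUnitary : Matrix n n ℂ)

lemma Matrix.PosSemidef.posSemidef_sqrt {n : Type*} [Fintype n] [DecidableEq n]
    {A : Matrix n n ℂ} (hA : A.PosSemidef) : hA.sqrt.PosSemidef := by
  unfold Matrix.PosSemidef.sqrt
  have hd : (diagonal ((↑) ∘ (√·) ∘ hA.1.eigenvalues : n → ℂ)).PosSemidef :=
    PosSemidef.diagonal fun i => by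
      simp only [Function.comp_apply, Pi.zero_apply]
      exact_mod_cast Real.sqrt_nonneg _
  simpa [star_eq_conjTranspose] using hd.mul_mul_conjTranspose_same hA.1.eigenvectorUnitary.1

lemma Matrix.PosSemidef.sqrt_mul_self {n : Type*} [Fintype n] [DecidableEq n]
    {A : Matrix n n ℂ} (hA : A.PosSemidef) : hA.sqrt * hA.sqrt = A := by
  unfold Matrix.PosSemidef.sqrt
  set U : Matrix n n ℂ := hA.1.eigenvectorUnitary.1
  have hU : (star hA.1.eigenvectorUnitary : Matrix n n ℂ) * U = 1 := Unitary.coe_star_mul_self _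
  have hsp := hA.1.spectral_theorem
  simp only [Unitary.conjStarAlgAut_apply] at hsp
  calc U * diagonal ((↑) ∘ (√·) ∘ hA.1.eigenvalues) * (star hA.1.eigenvectorUnitary : Matrix n n ℂ)
        * (U * diagonal ((↑) ∘ (√·) ∘ hA.1.eigenvalues) * (star hA.1.eigenvectorUnitary : Matrix n n ℂ))
      = U * (diagonal ((↑) ∘ (√·) ∘ hA.1.eigenvalues) * diagonal ((↑) ∘ (√·) ∘ hA.1.eigenvalues))
        * (star hA.1.eigenvectorUnitary : Matrix n n ℂ) := by
        simp only [Matrix.mul_assoc]; rw [← Matrix.mul_assoc _ U, hU, Matrix.one_mul]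
    _ = A := by
        rw [diagonal_mul_diagonal]
        conv_rhs => rw [hsp]
        congr 3
        funext i
        simp only [Function.comp_apply]
        rw [← Complex.ofReal_mul, Real.mul_self_sqrt (hA.eigenvalues_nonneg i)]
        rfl

/-- If `A, B` are positive semidefinite and `A² ≤ B²`, then `A ≤ B`. -/
private lemma psd_sub_of_sq_sub {n : ℕ} {A B : Matrix (Fin n) (Fin n) ℂ}
    (hA : A.PosSemidef) (hB : B.PosSemidef)
    (h : (B * B - A * A).PosSemidef) : (B - A).PosSemidef := by
  have hD : (B - A).IsHermitian := hB.1.sub hA.1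
  refine hD.posSemidef_iff_eigenvalues_nonneg.mpr (show ∀ i, (0:ℝ) ≤ hD.eigenvalues i from fun i => ?_)
  by_contra hneg
  push_neg at hneg
  set μ : ℝ := hD.eigenvalues i with hμ
  set v : Fin n → ℂ := ⇑(hD.eigenvectorBasis i) with hvdef
  have hv0 : v ≠ 0 := by
    intro h0
    have := hD.eigenvectorBasis.toBasis.ne_zero i
    rw [OrthonormalBasis.coe_toBasis] at this
    exact this (by ext j; exact congrFun h0 j)
  have hDv : (B - A) *ᵥ v = (μ : ℂ) • v := by
    have := hD.mulVec_eigenvectorBasis i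
    rw [RCLike.real_smul_eq_coe_smul (K := ℂ)] at this
    exact this
  set M : Matrix (Fin n) (Fin n) ℂ := A + B with hMdef
  have hM : M.PosSemidef := hA.add hB
  set q : ℂ := star v ⬝ᵥ M *ᵥ v with hq
  have q0 : 0 ≤ q := hM.dotProduct_mulVec_nonneg v
  have p1 : star v ⬝ᵥ (M * (B - A)) *ᵥ v = (μ : ℂ) * q := by
    rw [← mulVec_mulVec, hDv, mulVec_smul, dotProduct_smul, smul_eq_mul]
  have p2 : star v ⬝ᵥ ((B - A) * M) *ᵥ v = (μ : ℂ) * q := by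
    rw [← mulVec_mulVec, dotProduct_mulVec]
    have hstar : star v ᵥ* (B - A) = (μ : ℂ) • star v := by
      have := congrArg star hDv
      rw [star_mulVec, hD.eq, star_smul] at this
      simpa using this
    rw [hstar, smul_dotProduct, smul_eq_mul, hq, dotProduct_mulVec]
  have ringid : M * (B - A) + (B - A) * M = (B * B - A * A) + (B * B - A * A) := by
    rw [hMdef]; noncomm_ring
  have pos : 0 ≤ star v ⬝ᵥ ((M * (B - A) + (B - A) * M) *ᵥ v) := by
    rw [ringid, add_mulVec, dotProduct_add]
    exact add_nonneg (h.dotProduct_mulVec_nonneg v) (h.dotProduct_mulVec_nonneg v)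
  have key : star v ⬝ᵥ ((M * (B - A) + (B - A) * M) *ᵥ v) = 2 * (μ : ℂ) * q := by
    rw [add_mulVec, dotProduct_add, p1, p2]; ring
  rw [key] at pos
  -- derive q = 0
  rw [Complex.le_def] at q0 pos
  simp only [Complex.zero_re, Complex.zero_im] at q0 pos
  have him : q.im = 0 := q0.2.symm
  have hre : (2 * (μ : ℂ) * q).re = 2 * μ * q.re := by
    simp [Complex.mul_re, Complex.mul_im, him]
  rw [hre] at pos
  have hqre : q.re = 0 := by nlinarith [pos.1, q0.1, hneg]
  have hq0 : q = 0 := Complex.ext hqre him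
  have hMv : M *ᵥ v = 0 := (hM.dotProduct_mulVec_zero_iff v).mp (hq ▸ hq0)
  have hsum : star v ⬝ᵥ A *ᵥ v + star v ⬝ᵥ B *ᵥ v = 0 := by
    rw [← dotProduct_add, ← add_mulVec, ← hMdef, hMv, dotProduct_zero]
  have hAB := (add_eq_zero_iff_of_nonneg (hA.dotProduct_mulVec_nonneg v) (hB.dotProduct_mulVec_nonneg v)).mp hsum
  have hAv : A *ᵥ v = 0 := (hA.dotProduct_mulVec_zero_iff v).mp hAB.1
  have hBv : B *ᵥ v = 0 := (hB.dotProduct_mulVec_zero_iff v).mp hAB.2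
  have hzero : (μ : ℂ) • v = 0 := by rw [← hDv, sub_mulVec, hAv, hBv, sub_zero]
  rcases smul_eq_zero.mp hzero with hμ0 | hv0'
  · exact absurd (by exact_mod_cast hμ0) (ne_of_lt hneg)
  · exact hv0 hv0'

theorem hayashi_nagaoka {n : ℕ} (S T : Matrix (Fin n) (Fin n) ℂ)
    (hS : S.PosSemidef) (hSle : ((1 : Matrix (Fin n) (Fin n) ℂ) - S).PosSemidef)
    (hT : T.PosSemidef) (hST : (S + T).PosDef) :
    ((2 : ℂ) • ((1 : Matrix (Fin n) (Fin n) ℂ) - S) + (4 : ℂ) • T -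
      ((1 : Matrix (Fin n) (Fin n) ℂ) -
        (hST.posSemidef.sqrt)⁻¹ * S * (hST.posSemidef.sqrt)⁻¹)).PosSemidef := by
  set P : Matrix (Fin n) (Fin n) ℂ := hST.posSemidef.sqrt with hPdef
  have hP : P.PosSemidef := hST.posSemidef.posSemidef_sqrt
  have hPP : P * P = S + T := hST.posSemidef.sqrt_mul_self
  have hdet : IsUnit P.det := by
    rw [isUnit_iff_ne_zero]
    intro h0
    have h1 : P.det * P.det = (S + T).det := by rw [← det_mul, hPP]
    rw [h0, mul_zero] at h1
    exact (ne_of_gt hST.det_pos) h1.symm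
  set R : Matrix (Fin n) (Fin n) ℂ := P⁻¹ with hRdef
  have hRP : R * P = 1 := nonsing_inv_mul P hdet
  have hPR : P * R = 1 := mul_nonsing_inv P hdet
  have hRH : R.IsHermitian := hP.1.inv
  -- P - S is PSD
  set s : Matrix (Fin n) (Fin n) ℂ := hS.sqrt with hsdef
  have hs : s * s = S := hS.sqrt_mul_self
  have e2 : s * ((1 : Matrix (Fin n) (Fin n) ℂ) - S) * s = S - S * S := by
    rw [← hs]
    noncomm_ring
  have h1 : (s * ((1 : Matrix (Fin n) (Fin n) ℂ) - S) * s).PosSemidef := by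
    have := hSle.mul_mul_conjTranspose_same s
    rwa [hS.posSemidef_sqrt.1] at this
  have hsq : (P * P - S * S).PosSemidef := by
    have heq : P * P - S * S = T + s * ((1 : Matrix (Fin n) (Fin n) ℂ) - S) * s := by
      rw [e2, hPP]; abel
    rw [heq]
    exact hT.add h1
  have hPS : (P - S).PosSemidef := psd_sub_of_sq_sub hS hP hsq
  -- the two conjugation terms
  have h2 : ((R - 1) * S * (R - 1)).PosSemidef := by
    have := hS.mul_mul_conjTranspose_same (R - 1)
    rwa [show (R - 1)ᴴ = R - 1 from (hRH.sub isHermitian_one).eq] at this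
  have h3 : (((1 : Matrix (Fin n) (Fin n) ℂ) + 1 - R) * T *
      ((1 : Matrix (Fin n) (Fin n) ℂ) + 1 - R)).PosSemidef := by
    have := hT.mul_mul_conjTranspose_same ((1 : Matrix (Fin n) (Fin n) ℂ) + 1 - R)
    rwa [show ((1 : Matrix (Fin n) (Fin n) ℂ) + 1 - R)ᴴ = (1 : Matrix (Fin n) (Fin n) ℂ) + 1 - R
      from ((isHermitian_one.add isHermitian_one).sub hRH).eq] at this
  -- the key algebraic identity
  have hSval : S = P * P - T := by rw [hPP]; abel
  have c1 : ∀ X : Matrix (Fin n) (Fin n) ℂ, R * (P * X) = X := fun X => by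
    rw [← mul_assoc, hRP, one_mul]
  have c2 : ∀ X : Matrix (Fin n) (Fin n) ℂ, P * (R * X) = X := fun X => by
    rw [← mul_assoc, hPR, one_mul]
  have key : (2 : ℂ) • ((1 : Matrix (Fin n) (Fin n) ℂ) - S) + (4 : ℂ) • T -
      ((1 : Matrix (Fin n) (Fin n) ℂ) - R * S * R) =
      ((P - S) + (P - S) + (P - S) + (P - S)) + ((R - 1) * S * (R - 1) + (R - 1) * S * (R - 1)) +
      (((1 : Matrix (Fin n) (Fin n) ℂ) + 1 - R) * T *
        ((1 : Matrix (Fin n) (Fin n) ℂ) + 1 - R)) := by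
    have h4T : (4 : ℂ) • T = T + T + T + T := by
      have h42 : (4 : ℂ) = 2 + 2 := by norm_num
      rw [h42, add_smul]
      simp only [two_smul]
      abel
    rw [two_smul, h4T, hSval]
    simp only [mul_add, add_mul, mul_sub, sub_mul, mul_assoc, c1, c2, hRP, hPR,
      mul_one, one_mul]
    abel
  rw [key]
  exact ((((hPS.add hPS).add hPS).add hPS).add (h2.add h2)).add h3
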